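/- Let A be an m×d complex matrix with nonzero rows a_1*,…,a_m* and let b ∈ ℂ^m (the system A x = b need not be consistent). For each ℓ = 1,…,t let w_ℓ > 0 with Σ_{ℓ=1}^{t} w_ℓ = 1 and let (v_{ℓ,1},…,v_{ℓ,n_ℓ}) be a list of row indices such that every index in {1,…,m} occurs in at least one list; let ω_v be a real relaxation parameter for each row index v. Define Q_v x = x + ω_v((b_v − ⟨x, a_v⟩)/‖a_v‖²) a_v, P_v x = x − ω_v(⟨x, a_v⟩/‖a_v‖²) a_v, Q x = Σ_{ℓ=1}^{t} w_ℓ (Q_{v_{ℓ,n_ℓ}} ∘ ⋯ ∘ Q_{v_{ℓ,1}})(x), and P x = Σ_{ℓ=1}^{t} w_ℓ (P_{v_{ℓ,n_ℓ}} ∘ ⋯ ∘ P_{v_{ℓ,1}})(x), and let h = Q(0), so that Q x = P x + h for all x. Assume ‖P x‖ ≤ ‖x‖ for all x and that ‖P x‖ = ‖x‖ implies A x = 0. Then h lies in the range of A*, the series y₀ = Σ_{j=0}^{∞} P^j h converges, and for every initial vector x⁰ ∈ ℂ^d the iterates x^{n+1} = Q x^n converge to y₀ + Π x⁰, where Π is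 the orthogonal projection onto the null space {x : A x = 0}. -/

import Mathlib

namespace Stmt14Aux
variable {d m : ℕ}

noncomputable def stepP (a : Fin m → EuclideanSpace ℂ (Fin d)) (ω : Fin m → ℝ) (v : Fin m) :
    EuclideanSpace ℂ (Fin d) →L[ℂ] EuclideanSpace ℂ (Fin d) :=
  ContinuousLinearMap.id ℂ _ -
    ((ω v : ℂ) / ((‖a v‖ : ℂ) ^ 2)) • ((innerSL ℂ (a v)).smulRight (a v))

lemma stepP_apply (a : Fin m → EuclideanSpace ℂ (Fin d)) (ω : Fin m → ℝ) (v : Fin m) (y) :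
    stepP a ω v y = y - ((ω v : ℂ) * ((inner ℂ (a v) y : ℂ) / (‖a v‖ : ℂ) ^ 2)) • a v := by
  simp [stepP, smul_smul]
  ring_nf

noncomputable def foldP (a : Fin m → EuclideanSpace ℂ (Fin d)) (ω : Fin m → ℝ)
    (l : List (Fin m)) : EuclideanSpace ℂ (Fin d) →L[ℂ] EuclideanSpace ℂ (Fin d) :=
  l.foldl (fun M v => (stepP a ω v).comp M) (ContinuousLinearMap.id ℂ _)

lemma foldP_gen (a : Fin m → EuclideanSpace ℂ (Fin d)) (ω : Fin m → ℝ) (l : List (Fin m)) :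
    ∀ (M : EuclideanSpace ℂ (Fin d) →L[ℂ] EuclideanSpace ℂ (Fin d)) (x),
    (l.foldl (fun M v => (stepP a ω v).comp M) M) x =
      l.foldl (fun y v => y - ((ω v : ℂ) * ((inner ℂ (a v) y : ℂ) / (‖a v‖ : ℂ) ^ 2)) • a v) (M x) := by
  induction l with
  | nil => intro M x; rfl
  | cons v l ih =>
    intro M x
    simp only [List.foldl_cons]
    rw [ih]
    congr 1
    exact stepP_apply a ω v (M x)

lemma foldP_apply (a : Fin m → EuclideanSpace ℂ (Fin d)) (ω : Fin m → ℝ) (l : List (Fin m)) (x) :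
    foldP a ω l x =
      l.foldl (fun y v => y - ((ω v : ℂ) * ((inner ℂ (a v) y : ℂ) / (‖a v‖ : ℂ) ^ 2)) • a v) x := by
  exact foldP_gen a ω l _ x

lemma qfold_sub_pfold (a : Fin m → EuclideanSpace ℂ (Fin d)) (b : Fin m → ℂ) (ω : Fin m → ℝ)
    (l : List (Fin m)) : ∀ (x y : EuclideanSpace ℂ (Fin d)),
    l.foldl (fun y v => y + ((ω v : ℂ) * ((b v - (inner ℂ (a v) y : ℂ)) / (‖a v‖ : ℂ) ^ 2)) • a v) x
      - l.foldl (fun y v => y - ((ω v : ℂ) * ((inner ℂ (a v) y : ℂ) / (‖a v‖ : ℂ) ^ 2)) • a v) y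
    = l.foldl (fun y v => y + ((ω v : ℂ) * ((b v - (inner ℂ (a v) y : ℂ)) / (‖a v‖ : ℂ) ^ 2)) • a v) (x - y) := by
  induction l with
  | nil => intro x y; rfl
  | cons v l ih =>
    intro x y
    simp only [List.foldl_cons]
    rw [ih]
    congr 1
    rw [inner_sub_right]
    rw [show x + ((ω v : ℂ) * ((b v - (inner ℂ (a v) x : ℂ)) / (‖a v‖ : ℂ) ^ 2)) • a v
      - (y - ((ω v : ℂ) * ((inner ℂ (a v) y : ℂ) / (‖a v‖ : ℂ) ^ 2)) • a v)
      = (x - y) + (((ω v : ℂ) * ((b v - (inner ℂ (a v) x : ℂ)) / (‖a v‖ : ℂ) ^ 2))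
          + ((ω v : ℂ) * ((inner ℂ (a v) y : ℂ) / (‖a v‖ : ℂ) ^ 2))) • a v by module]
    congr 2
    ring

lemma qfold_mem (a : Fin m → EuclideanSpace ℂ (Fin d)) (b : Fin m → ℂ) (ω : Fin m → ℝ)
    (l : List (Fin m)) : ∀ (x : EuclideanSpace ℂ (Fin d)),
    x ∈ Submodule.span ℂ (Set.range a) →
    l.foldl (fun y v => y + ((ω v : ℂ) * ((b v - (inner ℂ (a v) y : ℂ)) / (‖a v‖ : ℂ) ^ 2)) • a v) x
      ∈ Submodule.span ℂ (Set.range a) := by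
  induction l with
  | nil => intro x hx; exact hx
  | cons v l ih =>
    intro x hx
    simp only [List.foldl_cons]
    apply ih
    exact Submodule.add_mem _ hx (Submodule.smul_mem _ _
      (Submodule.subset_span (Set.mem_range_self v)))

lemma pfold_mem (a : Fin m → EuclideanSpace ℂ (Fin d)) (ω : Fin m → ℝ)
    (l : List (Fin m)) : ∀ (x : EuclideanSpace ℂ (Fin d)),
    x ∈ Submodule.span ℂ (Set.range a) →
    l.foldl (fun y v => y - ((ω v : ℂ) * ((inner ℂ (a v) y : ℂ) / (‖a v‖ : ℂ) ^ 2)) • a v) x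
      ∈ Submodule.span ℂ (Set.range a) := by
  induction l with
  | nil => intro x hx; exact hx
  | cons v l ih =>
    intro x hx
    simp only [List.foldl_cons]
    apply ih
    exact Submodule.sub_mem _ hx (Submodule.smul_mem _ _
      (Submodule.subset_span (Set.mem_range_self v)))

lemma pfold_fix (a : Fin m → EuclideanSpace ℂ (Fin d)) (ω : Fin m → ℝ)
    (l : List (Fin m)) (x : EuclideanSpace ℂ (Fin d))
    (hx : x ∈ (Submodule.span ℂ (Set.range a))ᗮ) :
    l.foldl (fun y v => y - ((ω v : ℂ) * ((inner ℂ (a v) y : ℂ) / (‖a v‖ : ℂ) ^ 2)) • a v) x = x := by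
  induction l with
  | nil => rfl
  | cons v l ih =>
    simp only [List.foldl_cons]
    have h0 : (inner ℂ (a v) x : ℂ) = 0 :=
      hx (a v) (Submodule.subset_span (Set.mem_range_self v))
    rw [h0]
    simpa using ih

lemma mem_orthogonal_of_forall {E : Type*} [NormedAddCommGroup E] [InnerProductSpace ℂ E]
    (s : Set E) (x : E) (h : ∀ u ∈ s, (inner ℂ u x : ℂ) = 0) :
    x ∈ (Submodule.span ℂ s)ᗮ := by
  rw [Submodule.mem_orthogonal]
  intro u hu
  induction hu using Submodule.span_induction with
  | mem u hu => exact h u hu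
  | zero => simp
  | add u v _ _ hu hv => simp [inner_add_left, hu, hv]
  | smul c u _ hu => simp [inner_smul_left, hu]

end Stmt14Aux


open Stmt14Aux in
/-- For a (possibly inconsistent) system with rows `a_v*` and right-hand side
`b`, with the distributed Kaczmarz operators `Q` (affine) and `P` (linear part), `h = Q 0`,
under the hypotheses that `P` is a contraction and `‖P x‖ = ‖x‖` forces `A x = 0`: `h` lies in
the range of `A*` (= span of the `a_v`), the series `y₀ = Σ_j P^j h` converges, and for every
initial vector `x⁰` the iterates `x^{n+1} = Q x^n` converge to `y₀ + Π x⁰`, where `Π` is the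
orthogonal projection onto the null space `{x : A x = 0}` (= the orthogonal complement of the
span of the `a_v`). -/
theorem stmt_14 {d m t : ℕ} (a : Fin m → EuclideanSpace ℂ (Fin d)) (ha : ∀ v, a v ≠ 0)
    (b : Fin m → ℂ)
    (w : Fin t → ℝ) (hw : ∀ ℓ, 0 < w ℓ) (hw1 : ∑ ℓ, w ℓ = 1)
    (paths : Fin t → List (Fin m)) (hcover : ∀ j : Fin m, ∃ ℓ, j ∈ paths ℓ)
    (ω : Fin m → ℝ)
    (Q P : EuclideanSpace ℂ (Fin d) → EuclideanSpace ℂ (Fin d))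
    (hQ : ∀ x, Q x = ∑ ℓ, w ℓ • (paths ℓ).foldl
      (fun y v => y + ((ω v : ℂ) * ((b v - (inner ℂ (a v) y : ℂ)) / (‖a v‖ : ℂ) ^ 2)) • a v) x)
    (hP : ∀ x, P x = ∑ ℓ, w ℓ • (paths ℓ).foldl
      (fun y v => y - ((ω v : ℂ) * ((inner ℂ (a v) y : ℂ) / (‖a v‖ : ℂ) ^ 2)) • a v) x)
    (hPcon : ∀ x, ‖P x‖ ≤ ‖x‖)
    (hPstrict : ∀ x, ‖P x‖ = ‖x‖ → ∀ v, (inner ℂ (a v) x : ℂ) = 0) :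
    Q 0 ∈ Submodule.span ℂ (Set.range a) ∧
    ∃ y0 : EuclideanSpace ℂ (Fin d),
      HasSum (fun j : ℕ => P^[j] (Q 0)) y0 ∧
      ∀ (x0 : EuclideanSpace ℂ (Fin d)) (xseq : ℕ → EuclideanSpace ℂ (Fin d)),
        xseq 0 = x0 → (∀ n, xseq (n + 1) = Q (xseq n)) →
        Filter.Tendsto xseq Filter.atTop
          (nhds (y0 + (Submodule.orthogonalProjection (Submodule.span ℂ (Set.range a))ᗮ x0 :
            EuclideanSpace ℂ (Fin d)))) := by
  classical
  set S : Submodule ℂ (EuclideanSpace ℂ (Fin d)) := Submodule.span ℂ (Set.range a) with hSdef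
  set Pl : EuclideanSpace ℂ (Fin d) →L[ℂ] EuclideanSpace ℂ (Fin d) :=
    ∑ ℓ, (w ℓ : ℂ) • foldP a ω (paths ℓ) with hPldef
  have hPeq : ∀ x, P x = Pl x := by
    intro x
    rw [hP, hPldef]
    simp only [ContinuousLinearMap.sum_apply, ContinuousLinearMap.smul_apply, foldP_apply]
    refine Finset.sum_congr rfl fun ℓ _ => ?_
    rw [Complex.coe_smul]
  -- Q 0 ∈ S
  have hQ0mem : Q 0 ∈ S := by
    rw [hQ]
    refine Submodule.sum_mem _ fun ℓ _ => ?_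
    exact Submodule.smul_of_tower_mem _ _ (qfold_mem a b ω (paths ℓ) 0 (Submodule.zero_mem _))
  -- Q x = P x + Q 0
  have hQP : ∀ x, Q x = P x + Q 0 := by
    intro x
    rw [← sub_eq_iff_eq_add']
    rw [hQ, hP, hQ, ← Finset.sum_sub_distrib]
    refine Finset.sum_congr rfl fun ℓ _ => ?_
    rw [← smul_sub, qfold_sub_pfold, sub_self]
  -- P fixes the orthogonal complement
  have hPfix : ∀ x ∈ Sᗮ, P x = x := by
    intro x hx
    rw [hP]
    have hfix : ∀ ℓ : Fin t, (paths ℓ).foldl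
        (fun y v => y - ((ω v : ℂ) * ((inner ℂ (a v) y : ℂ) / (‖a v‖ : ℂ) ^ 2)) • a v) x = x :=
      fun ℓ => pfold_fix a ω (paths ℓ) x hx
    simp only [hfix]
    rw [← Finset.sum_smul, hw1, one_smul]
  -- P maps S into S
  have hPmem : ∀ x ∈ S, P x ∈ S := by
    intro x hx
    rw [hP]
    exact Submodule.sum_mem _ fun ℓ _ =>
      Submodule.smul_of_tower_mem _ _ (pfold_mem a ω (paths ℓ) x hx)
  -- contraction constant on S
  obtain ⟨c, hc0, hc1, hc⟩ : ∃ c : ℝ, 0 ≤ c ∧ c < 1 ∧ ∀ x ∈ S, ‖P x‖ ≤ c * ‖x‖ := by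
    by_cases hne : (Metric.sphere (0 : EuclideanSpace ℂ (Fin d)) 1 ∩ (S : Set _)).Nonempty
    · obtain ⟨x₀, hx₀K, hmax⟩ :=
        ((isCompact_sphere (0 : EuclideanSpace ℂ (Fin d)) 1).inter_right
          S.closed_of_finiteDimensional).exists_isMaxOn hne (Pl.continuous.norm.continuousOn)
      obtain ⟨hx₀s, hx₀S⟩ := hx₀K
      have hx₀1 : ‖x₀‖ = 1 := by simpa using hx₀s
      refine ⟨‖Pl x₀‖, norm_nonneg _, ?_, ?_⟩
      · have hle : ‖Pl x₀‖ ≤ 1 := by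
          rw [← hPeq, ← hx₀1]; exact hPcon x₀
        rcases lt_or_eq_of_le hle with h | h
        · exact h
        · exfalso
          have heq : ‖P x₀‖ = ‖x₀‖ := by rw [hPeq, h, hx₀1]
          have horth : x₀ ∈ Sᗮ := mem_orthogonal_of_forall _ _ (by
            rintro u ⟨v, rfl⟩
            exact hPstrict x₀ heq v)
          have : (inner ℂ x₀ x₀ : ℂ) = 0 := horth x₀ hx₀S
          rw [inner_self_eq_zero] at this
          rw [this, norm_zero] at hx₀1
          norm_num at hx₀1
      · intro x hx
        rcases eq_or_ne x 0 with rfl | hx0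
        · rw [hPeq, map_zero]; simp
        · have hnx : ‖x‖ ≠ 0 := norm_ne_zero_iff.2 hx0
          set u : EuclideanSpace ℂ (Fin d) := ((‖x‖ : ℂ)⁻¹) • x with hu
          have hun : ‖u‖ = 1 := by
            rw [hu, norm_smul]
            simp [hnx]
          have huS : u ∈ S := Submodule.smul_mem _ _ hx
          have huK : u ∈ Metric.sphere (0 : EuclideanSpace ℂ (Fin d)) 1 ∩ (S : Set _) := by
            constructor
            · simpa using hun
            · exact huS
          have hb : ‖Pl u‖ ≤ ‖Pl x₀‖ := hmax huK
          have hPlu : Pl u = ((‖x‖ : ℂ)⁻¹) • Pl x := by rw [hu, map_smul]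
          have hnorm : ‖Pl u‖ = ‖x‖⁻¹ * ‖Pl x‖ := by
            rw [hPlu, norm_smul]
            simp
          have : ‖x‖⁻¹ * ‖Pl x‖ ≤ ‖Pl x₀‖ := hnorm ▸ hb
          rw [hPeq]
          calc ‖Pl x‖ = ‖x‖ * (‖x‖⁻¹ * ‖Pl x‖) := by field_simp
          _ ≤ ‖x‖ * ‖Pl x₀‖ := by
              exact mul_le_mul_of_nonneg_left this (norm_nonneg _)
          _ = ‖Pl x₀‖ * ‖x‖ := mul_comm _ _
    · refine ⟨0, le_refl _, one_pos, ?_⟩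
      intro x hx
      have hx0 : x = 0 := by
        by_contra hx0
        refine hne ⟨((‖x‖ : ℂ)⁻¹) • x, ?_, Submodule.smul_mem _ _ hx⟩
        have hnx : ‖x‖ ≠ 0 := norm_ne_zero_iff.2 hx0
        simp [norm_smul, hnx]
      subst hx0
      rw [hPeq]
      simp
  -- iterates stay in S with geometric decay
  have hiter : ∀ n, ∀ x ∈ S, P^[n] x ∈ S ∧ ‖P^[n] x‖ ≤ c ^ n * ‖x‖ := by
    intro n
    induction n with
    | zero => intro x hx; simpa using hx
    | succ n ih =>
      intro x hx
      rw [Function.iterate_succ_apply']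
      obtain ⟨hmem, hbd⟩ := ih x hx
      refine ⟨hPmem _ hmem, ?_⟩
      calc ‖P (P^[n] x)‖ ≤ c * ‖P^[n] x‖ := hc _ hmem
      _ ≤ c * (c ^ n * ‖x‖) := mul_le_mul_of_nonneg_left hbd hc0
      _ = c ^ (n + 1) * ‖x‖ := by ring
  have hsummable : Summable (fun j : ℕ => P^[j] (Q 0)) := by
    apply Summable.of_norm_bounded (g := fun j => c ^ j * ‖Q 0‖)
      ((summable_geometric_of_lt_one hc0 hc1).mul_right _)
    intro j
    exact (hiter j (Q 0) hQ0mem).2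
  refine ⟨hQ0mem, ∑' j, P^[j] (Q 0), hsummable.hasSum, ?_⟩
  intro x0 xseq h0 hrec
  set u : EuclideanSpace ℂ (Fin d) :=
    (Submodule.orthogonalProjection Sᗮ x0 : EuclideanSpace ℂ (Fin d)) with hudef
  have huO : u ∈ Sᗮ := SetLike.coe_mem _
  have hsS : x0 - u ∈ S := by
    have h1 := Submodule.sub_starProjection_mem_orthogonal (K := Sᗮ) x0
    rwa [Submodule.orthogonal_orthogonal] at h1
  have hPadd : ∀ x y, P (x + y) = P x + P y := by
    intro x y; rw [hPeq, hPeq, hPeq, map_add]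
  have hPiterfix : ∀ n, P^[n] u = u := by
    intro n
    induction n with
    | zero => rfl
    | succ n ihn => rw [Function.iterate_succ_apply', ihn, hPfix u huO]
  have hiteradd : ∀ n, ∀ x y, P^[n] (x + y) = P^[n] x + P^[n] y := by
    intro n
    induction n with
    | zero => intro x y; rfl
    | succ n ihn =>
      intro x y
      rw [Function.iterate_succ_apply', Function.iterate_succ_apply',
        Function.iterate_succ_apply', ihn, hPadd]
  have hform : ∀ n, xseq n = P^[n] x0 + ∑ j ∈ Finset.range n, P^[j] (Q 0) := by
    intro n
    induction n with
    | zero => simpa using h0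
    | succ n ihn =>
      rw [hrec n, ihn, hQP, hPadd]
      have h2 : P (∑ j ∈ Finset.range n, P^[j] (Q 0))
          = ∑ j ∈ Finset.range n, P^[j + 1] (Q 0) := by
        rw [hPeq, map_sum]
        refine Finset.sum_congr rfl fun j _ => ?_
        rw [← hPeq, Function.iterate_succ_apply' P j (Q 0)]
      rw [h2, ← Function.iterate_succ_apply' P n x0, Finset.sum_range_succ']
      simp [add_assoc]
  have hT1 : Filter.Tendsto (fun n => ∑ j ∈ Finset.range n, P^[j] (Q 0)) Filter.atTop
      (nhds (∑' j, P^[j] (Q 0))) := hsummable.hasSum.tendsto_sum_nat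
  have hzero : Filter.Tendsto (fun n => P^[n] (x0 - u)) Filter.atTop (nhds 0) := by
    rw [tendsto_zero_iff_norm_tendsto_zero]
    apply squeeze_zero (fun n => norm_nonneg _) (fun n => (hiter n _ hsS).2)
    have := (tendsto_pow_atTop_nhds_zero_of_lt_one hc0 hc1).mul_const ‖x0 - u‖
    simpa using this
  have hT2 : Filter.Tendsto (fun n => P^[n] x0) Filter.atTop (nhds u) := by
    have heq2 : (fun n => P^[n] x0) = fun n => P^[n] (x0 - u) + u := by
      funext n
      conv_lhs => rw [show x0 = (x0 - u) + u by abel]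
      rw [hiteradd, hPiterfix]
    rw [heq2]
    simpa using hzero.add (tendsto_const_nhds (x := u))
  have hfinal := hT2.add hT1
  rw [add_comm] at hfinal
  exact hfinal.congr fun n => (hform n).symm
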